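/- Let S ⊂ [n]×[n] be a partial permutation with |S| ≤ n/4 and n − |S| ≥ 4, such that some derangement of [n] contains S in its graph. Then |D_n(S)| ≥ d_{n−|S|} > (n−|S|)!/3, where D_n(S) = {σ \ S : σ ∈ D_n, S ⊆ σ} (permutations identified with their graphs). -/
import Mathlib


/-- The graph of a permutation `σ` of `[n]`, i.e. the set
`{(i, σ i) : i ∈ [n]} ⊆ [n] × [n]`. -/
def permGraph {n : ℕ} (σ : Equiv.Perm (Fin n)) : Finset (Fin n × Fin n) :=
  Finset.univ.image fun i => (i, σ i)

/-- For a family `F` of subsets of `[n] × [n]` and a set `X`,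
`F(X) := {F \ X : F ∈ F, X ⊆ F}`. -/
def restrictAt {α : Type*} [DecidableEq α] (F : Finset (Finset α)) (X : Finset α) :
    Finset (Finset α) :=
  (F.filter fun A => X ⊆ A).image fun A => A \ X

lemma permGraph_mem {n : ℕ} (σ : Equiv.Perm (Fin n)) (p : Fin n × Fin n) :
    p ∈ permGraph σ ↔ σ p.1 = p.2 := by
  simp only [permGraph, Finset.mem_image, Finset.mem_univ, true_and]
  constructor
  · rintro ⟨i, rfl⟩; rfl
  · intro h; exact ⟨p.1, by rw [h]⟩

lemma permGraph_injective {n : ℕ} : Function.Injective (permGraph (n := n)) := by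
  intro σ τ h
  apply Equiv.ext
  intro i
  have h1 : (i, σ i) ∈ permGraph τ := by rw [← h, permGraph_mem]
  exact ((permGraph_mem τ _).1 h1).symm

section Hperm
variable {n : ℕ} (σ₀ : Equiv.Perm (Fin n)) (X : Finset (Fin n))

noncomputable def hEquiv :
    ↥(X.filter fun y => σ₀.symm y ∉ X) ≃ ↥(X.filter fun y => σ₀ y ∉ X) := by
  apply Fintype.equivOfCardEq
  rw [Fintype.card_coe, Fintype.card_coe]
  have h1 : ((X.filter fun y => σ₀ y ∈ X).image σ₀) = X.filter (fun y => σ₀.symm y ∈ X) := by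
    ext z
    simp only [Finset.mem_image, Finset.mem_filter]
    constructor
    · rintro ⟨y, ⟨hy, hy2⟩, rfl⟩; simpa using ⟨hy2, hy⟩
    · rintro ⟨hz, hz2⟩; exact ⟨σ₀.symm z, ⟨hz2, by simpa using hz⟩, by simp⟩
  have h2 : (X.filter fun y => σ₀.symm y ∈ X).card
      + (X.filter fun y => σ₀.symm y ∉ X).card = X.card := by
    simpa using Finset.card_filter_add_card_filter_not
      (s := X) (p := fun y => σ₀.symm y ∈ X)
  have h3 : (X.filter fun y => σ₀ y ∈ X).card
      + (X.filter fun y => σ₀ y ∉ X).card = X.card := by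
    simpa using Finset.card_filter_add_card_filter_not
      (s := X) (p := fun y => σ₀ y ∈ X)
  have h4 : ((X.filter fun y => σ₀ y ∈ X).image σ₀).card
      = (X.filter fun y => σ₀ y ∈ X).card :=
    Finset.card_image_of_injective _ σ₀.injective
  rw [h1] at h4
  omega

noncomputable def hfun : Fin n → Fin n := fun x =>
  if x ∈ X ∧ σ₀.symm x ∈ X then σ₀.symm x
  else if hx : x ∈ X.filter (fun y => σ₀.symm y ∉ X) then (hEquiv σ₀ X ⟨x, hx⟩ : Fin n)
  else x

lemma hfun_apply_dom {x : Fin n} (hx : x ∈ X) (hx2 : σ₀.symm x ∈ X) :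
    hfun σ₀ X x = σ₀.symm x := by
  rw [hfun, if_pos ⟨hx, hx2⟩]

lemma hfun_apply_out {x : Fin n} (hx : x ∉ X) : hfun σ₀ X x = x := by
  rw [hfun, if_neg (by tauto), dif_neg (by simp [hx])]

lemma hfun_mem {x : Fin n} (hx : x ∈ X) : hfun σ₀ X x ∈ X := by
  rw [hfun]
  split_ifs with h1 h2
  · exact h1.2
  · exact (Finset.mem_filter.1 (Finset.coe_mem _)).1
  · exact hx

lemma hfun_sigma_mem {x : Fin n} (hx : x ∈ X) :
    σ₀ (hfun σ₀ X x) ∈ X ↔ σ₀.symm x ∈ X := by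
  rw [hfun]
  split_ifs with h1 h2
  · simp [h1.2, hx]
  · have h3 := (Finset.mem_filter.1 (Finset.coe_mem (hEquiv σ₀ X ⟨x, h2⟩))).2
    have h4 := (Finset.mem_filter.1 h2).2
    simp only [h3, false_iff]
    exact h4
  · exact absurd (Finset.mem_filter.2 ⟨hx, fun hc => h1 ⟨hx, hc⟩⟩) h2

lemma hfun_injective : Function.Injective (hfun σ₀ X) := by
  intro a b hab
  by_cases ha : a ∈ X <;> by_cases hb : b ∈ X
  · have hsig : σ₀ (hfun σ₀ X a) ∈ X ↔ σ₀.symm a ∈ X := hfun_sigma_mem σ₀ X ha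
    have hsig' : σ₀ (hfun σ₀ X b) ∈ X ↔ σ₀.symm b ∈ X := hfun_sigma_mem σ₀ X hb
    rw [hab] at hsig
    by_cases ha2 : σ₀.symm a ∈ X <;> by_cases hb2 : σ₀.symm b ∈ X
    · rw [hfun_apply_dom σ₀ X ha ha2, hfun_apply_dom σ₀ X hb hb2] at hab
      exact σ₀.symm.injective hab
    · exact absurd (hsig.2 ha2) (fun h => hb2 (hsig'.1 h))
    · exact absurd (hsig'.2 hb2) (fun h => ha2 (hsig.1 h))
    · have hae : a ∈ X.filter (fun y => σ₀.symm y ∉ X) := Finset.mem_filter.2 ⟨ha, ha2⟩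
      have hbe : b ∈ X.filter (fun y => σ₀.symm y ∉ X) := Finset.mem_filter.2 ⟨hb, hb2⟩
      rw [hfun, if_neg (by tauto), dif_pos hae] at hab
      rw [hfun, if_neg (by tauto), dif_pos hbe] at hab
      exact congrArg Subtype.val ((hEquiv σ₀ X).injective (Subtype.ext hab))
  · rw [hfun_apply_out σ₀ X hb] at hab
    exact absurd (hab ▸ hfun_mem σ₀ X ha) hb
  · rw [hfun_apply_out σ₀ X ha] at hab
    exact absurd (hab.symm ▸ hfun_mem σ₀ X hb) ha
  · rw [hfun_apply_out σ₀ X ha, hfun_apply_out σ₀ X hb] at hab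
    exact hab

noncomputable def hperm : Equiv.Perm (Fin n) :=
  Equiv.ofBijective (hfun σ₀ X)
    ((Finite.injective_iff_bijective).1 (hfun_injective σ₀ X))

lemma hperm_apply_dom {x : Fin n} (hx : x ∈ X) (hx2 : σ₀.symm x ∈ X) :
    hperm σ₀ X x = σ₀.symm x := hfun_apply_dom σ₀ X hx hx2

lemma hperm_apply_out {x : Fin n} (hx : x ∉ X) : hperm σ₀ X x = x :=
  hfun_apply_out σ₀ X hx

lemma hperm_mem {x : Fin n} (hx : x ∈ X) : hperm σ₀ X x ∈ X :=
  hfun_mem σ₀ X hx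

end Hperm

lemma three_numDer {m : ℕ} (hm : 4 ≤ m) :
    (Nat.factorial m : ℤ) + 3 ≤ 3 * (numDerangements m : ℤ) := by
  induction m with
  | zero => omega
  | succ k ih =>
    rcases eq_or_lt_of_le hm with h | h
    · have hk : k = 3 := by omega
      subst hk
      norm_num [numDerangements, Nat.factorial]
    · have hk : 4 ≤ k := by omega
      have ihk := ih hk
      have hrec := numDerangements_succ k
      have hfac : (Nat.factorial (k+1) : ℤ) = (k+1) * Nat.factorial k := by
        push_cast [Nat.factorial_succ]; ring
      have hk' : (4 : ℤ) ≤ k := by exact_mod_cast hk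
      rcases Nat.even_or_odd k with hp | hp
      · rw [hp.neg_one_pow] at hrec
        nlinarith [mul_le_mul_of_nonneg_left ihk (show (0:ℤ) ≤ k+1 by positivity)]
      · rw [hp.neg_one_pow] at hrec
        nlinarith [mul_le_mul_of_nonneg_left ihk (show (0:ℤ) ≤ k+1 by positivity)]

/-- **Size of restrictions of the family of derangements (used in Lemma 10).**
If `S ⊆ [n] × [n]` is a partial permutation with `|S| ≤ n/4` and `n - |S| ≥ 4`
which is contained in the graph of some derangement of `[n]`, then
`|D_n(S)| ≥ d_{n-|S|} > (n-|S|)!/3`, where `D_n` is the family of graphs of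
derangements of `[n]` and `d_m` the number of derangements of `[m]`. -/
theorem derangement_restriction_large {n : ℕ} (S : Finset (Fin n × Fin n))
    (hScard : (S.card : ℝ) ≤ (n : ℝ) / 4) (hS4 : 4 ≤ n - S.card)
    (hsome : ∃ σ : Equiv.Perm (Fin n), (∀ i, σ i ≠ i) ∧ S ⊆ permGraph σ) :
    numDerangements (n - S.card) ≤
        (restrictAt ((Finset.univ.filter fun σ : Equiv.Perm (Fin n) =>
          ∀ i, σ i ≠ i).image permGraph) S).card ∧
      ((Nat.factorial (n - S.card) : ℝ) / 3 < (numDerangements (n - S.card) : ℝ)) := by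
  obtain ⟨σ₀, hσ₀d, hσ₀S⟩ := hsome
  constructor
  · -- part 1
    set A : Finset (Fin n) := S.image Prod.fst with hA
    have hAcard : A.card = S.card := by
      apply Finset.card_image_of_injOn
      intro p hp q hq hpq
      have hp' := (permGraph_mem σ₀ p).1 (hσ₀S hp)
      have hq' := (permGraph_mem σ₀ q).1 (hσ₀S hq)
      exact Prod.ext hpq (by rw [← hp', ← hq', hpq])
    set X : Finset (Fin n) := Aᶜ with hXdef
    have hXcard : X.card = n - S.card := by
      rw [hXdef, Finset.card_compl, Fintype.card_fin, hAcard]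
    set h := hperm σ₀ X with hh
    have key : ∀ π : Equiv.Perm ↥X, π ∈ derangements ↥X →
        (∀ i, ((((π.extendDomain (Equiv.refl {x : Fin n // x ∈ X})).trans h).trans σ₀) i ≠ i))
        ∧ S ⊆ permGraph (((π.extendDomain (Equiv.refl {x : Fin n // x ∈ X})).trans h).trans σ₀) := by
      intro π hπ
      have heπ : ∀ (x : Fin n) (hx : x ∈ X),
          π.extendDomain (Equiv.refl {x : Fin n // x ∈ X}) x = ↑(π ⟨x, hx⟩) := by
        intro x hx
        simpa using π.extendDomain_apply_subtype (Equiv.refl {x : Fin n // x ∈ X}) hx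
      have heπ' : ∀ (x : Fin n), x ∉ X →
          π.extendDomain (Equiv.refl {x : Fin n // x ∈ X}) x = x := by
        intro x hx
        exact π.extendDomain_apply_not_subtype (Equiv.refl {x : Fin n // x ∈ X}) hx
      constructor
      · intro i
        by_cases hi : i ∈ X
        · simp only [Equiv.trans_apply]
          rw [heπ i hi]
          intro hcon
          have hmem : ↑(π ⟨i, hi⟩) ∈ X := Finset.coe_mem _
          have h1 : h ↑(π ⟨i, hi⟩) = σ₀.symm i := by
            apply σ₀.injective
            simpa using hcon
          have h2 : σ₀.symm i ∈ X := h1 ▸ hperm_mem σ₀ X hmem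
          have h3 : h i = σ₀.symm i := hperm_apply_dom σ₀ X hi h2
          have h4 : (↑(π ⟨i, hi⟩) : Fin n) = i := h.injective (by rw [h1, h3])
          exact hπ ⟨i, hi⟩ (Subtype.ext h4)
        · simp only [Equiv.trans_apply]
          rw [heπ' i hi, hperm_apply_out σ₀ X hi]
          exact hσ₀d i
      · intro p hp
        rw [permGraph_mem]
        have hp1 : p.1 ∈ A := Finset.mem_image.2 ⟨p, hp, rfl⟩
        have hp1' : p.1 ∉ X := by simp [hXdef, hp1]
        simp only [Equiv.trans_apply]
        rw [heπ' p.1 hp1', hperm_apply_out σ₀ X hp1']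
        exact (permGraph_mem σ₀ p).1 (hσ₀S hp)
    let Φ : ↥(derangements ↥X) →
        {σ : Equiv.Perm (Fin n) // σ ∈ Finset.univ.filter fun σ : Equiv.Perm (Fin n) =>
          (∀ i, σ i ≠ i) ∧ S ⊆ permGraph σ} := fun π =>
      ⟨((π.1.extendDomain (Equiv.refl {x : Fin n // x ∈ X})).trans h).trans σ₀, by
        simpa using key π.1 π.2⟩
    have hΦinj : Function.Injective Φ := by
      intro π π' hΦ
      have h1 : ((π.1.extendDomain (Equiv.refl {x : Fin n // x ∈ X})).trans h).trans σ₀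
          = ((π'.1.extendDomain (Equiv.refl {x : Fin n // x ∈ X})).trans h).trans σ₀ :=
        congrArg Subtype.val hΦ
      have h2 : ∀ x : ↥X, π.1 x = π'.1 x := by
        intro x
        have h3 := congrFun (congrArg (fun e => (e : Equiv.Perm (Fin n)) ∘ id)
          h1) (x : Fin n)
        simp only [Equiv.trans_apply, Function.comp, id] at h3
        have h4 := σ₀.injective h3
        have h5 := h.injective h4
        rw [π.1.extendDomain_apply_subtype (Equiv.refl {x : Fin n // x ∈ X}) x.2,
          π'.1.extendDomain_apply_subtype (Equiv.refl {x : Fin n // x ∈ X}) x.2] at h5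
        apply Subtype.ext
        simpa using h5
      exact Subtype.ext (Equiv.ext h2)
    have hc1 : numDerangements (n - S.card) = Fintype.card (derangements ↥X) := by
      rw [card_derangements_eq_numDerangements, Fintype.card_coe, hXcard]
    have hc2 := Fintype.card_le_of_injective Φ hΦinj
    rw [Fintype.card_coe] at hc2
    have hre : (restrictAt ((Finset.univ.filter fun σ : Equiv.Perm (Fin n) =>
          ∀ i, σ i ≠ i).image permGraph) S).card
        = (Finset.univ.filter fun σ : Equiv.Perm (Fin n) =>
            (∀ i, σ i ≠ i) ∧ S ⊆ permGraph σ).card := by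
      rw [restrictAt, Finset.filter_image, Finset.image_image, Finset.filter_filter]
      apply Finset.card_image_of_injOn
      intro σ hσ τ hτ hst
      simp only [Finset.mem_coe, Finset.mem_filter] at hσ hτ
      apply permGraph_injective
      have e1 : permGraph σ \ S ∪ S = permGraph σ := Finset.sdiff_union_of_subset hσ.2.2
      have e2 : permGraph τ \ S ∪ S = permGraph τ := Finset.sdiff_union_of_subset hτ.2.2
      rw [← e1, ← e2]
      simp only [Function.comp] at hst
      rw [hst]
    rw [hre, hc1]
    exact hc2
  · -- part 2
    have h1 := three_numDer hS4
    have h2 : ((Nat.factorial (n - S.card) : ℝ)) < 3 * (numDerangements (n - S.card) : ℝ) := by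
      have : (Nat.factorial (n - S.card) : ℤ) < 3 * (numDerangements (n - S.card) : ℤ) := by
        linarith
      exact_mod_cast this
    linarith
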